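/- Let X ∈ ℂ^n admit a finite atomic decomposition X = Σ_{j=1}^k |c_j| a(t_j, φ_j) with t_j ∈ [0,1), φ_j ∈ [0,2π), c_j ∈ ℂ. Set T = Σ_{j=1}^k |c_j| a(t_j,φ_j) a(t_j,φ_j)ᴴ and s = Σ_{j=1}^k |c_j|. Then the (n+1)×(n+1) block matrix [[T, X],[Xᴴ, s]] is positive semidefinite and (1/n)·s·Tr(T) = (Σ_{j=1}^k |c_j|)². Consequently, the infimum of (1/n)·s·Tr(Toep(u)) over all (u, s) making [[Toep(u), X],[Xᴴ, s]] positive semidefinite is at most ‖X‖_A². -/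

import Mathlib

open Matrix Complex ComplexConjugate BigOperators
open scoped ComplexOrder

/-- The atom `a(t,φ) ∈ ℂ^n` with `f`-th entry `e^{−i(2πft−φ)}`. -/
noncomputable def atom (n : ℕ) (t φ : ℝ) : Fin n → ℂ :=
  fun f => Complex.exp (-Complex.I * ((2 * Real.pi * (f : ℕ) * t : ℝ) - (φ : ℝ)))

/-- The atomic norm of `X ∈ ℂ^n`. -/
noncomputable def atomicNorm {n : ℕ} (X : Fin n → ℂ) : ℝ :=
  sInf { v : ℝ | ∃ (k : ℕ) (c : Fin k → ℂ) (t φ : Fin k → ℝ),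
    (∀ j, t j ∈ Set.Ico (0 : ℝ) 1) ∧ (∀ j, φ j ∈ Set.Ico (0 : ℝ) (2 * Real.pi)) ∧
    X = ∑ j, (‖c j‖ : ℂ) • atom n (t j) (φ j) ∧
    v = ∑ j, ‖c j‖ }

/-- The Hermitian Toeplitz matrix whose first column is `u`. -/
def toep (n : ℕ) (u : Fin n → ℂ) : Matrix (Fin n) (Fin n) ℂ :=
  Matrix.of fun j k =>
    if (k : ℕ) ≤ (j : ℕ) then
      u ⟨(j : ℕ) - (k : ℕ), lt_of_le_of_lt (Nat.sub_le _ _) j.isLt⟩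
    else
      star (u ⟨(k : ℕ) - (j : ℕ), lt_of_le_of_lt (Nat.sub_le _ _) k.isLt⟩)

/-- The `(n+1)×(n+1)` block matrix `[[T, X],[Xᴴ, s]]`. -/
noncomputable def blockMat {n : ℕ} (T : Matrix (Fin n) (Fin n) ℂ) (X : Fin n → ℂ) (s : ℝ) :
    Matrix (Fin n ⊕ Unit) (Fin n ⊕ Unit) ℂ :=
  Matrix.fromBlocks T (Matrix.replicateCol Unit X) (Matrix.replicateRow Unit (star X))
    (Matrix.of fun _ _ => (s : ℂ))

/-! ### Auxiliary lemmas -/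

noncomputable def featA (n k : ℕ) (c : Fin k → ℂ) (t φ : Fin k → ℝ) :
    Matrix (Fin k) (Fin n ⊕ Unit) ℂ :=
  Matrix.of fun j i =>
    ((Real.sqrt (‖c j‖) : ℝ) : ℂ) *
      star (Sum.elim (atom n (t j) (φ j)) (fun _ => (1 : ℂ)) i)

lemma atom_mul_conj (n : ℕ) (t φ : ℝ) (f g : Fin n) :
    atom n t φ f * conj (atom n t φ g) =
      Complex.exp (-Complex.I * ((2 * Real.pi * (f : ℕ) * t - 2 * Real.pi * (g : ℕ) * t : ℝ))) := by
  rw [atom, atom, ← Complex.exp_conj, ← Complex.exp_add]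
  congr 1
  simp only [_root_.map_mul, map_neg, Complex.conj_I, map_sub, Complex.conj_ofReal]
  push_cast
  ring

lemma blockMat_eq (n k : ℕ) (X : Fin n → ℂ) (c : Fin k → ℂ) (t φ : Fin k → ℝ)
    (hX : X = ∑ j, (‖c j‖ : ℂ) • atom n (t j) (φ j)) :
    blockMat
        (∑ j, (‖c j‖ : ℂ) •
          vecMulVec (atom n (t j) (φ j)) (star (atom n (t j) (φ j))))
        X (∑ j, ‖c j‖) = (featA n k c t φ)ᴴ * featA n k c t φ := by
  have key : ∀ (j : Fin k) (i i' : Fin n ⊕ Unit),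
      ((featA n k c t φ)ᴴ i j) * (featA n k c t φ j i') =
      (‖c j‖ : ℂ) * (Sum.elim (atom n (t j) (φ j)) (fun _ => (1 : ℂ)) i *
        conj (Sum.elim (atom n (t j) (φ j)) (fun _ => (1 : ℂ)) i')) := by
    intro j i i'
    simp only [featA, conjTranspose_apply, Matrix.of_apply, star_mul', star_star,
      RCLike.star_def, Complex.conj_ofReal, Complex.conj_conj]
    rw [show ((Real.sqrt (‖c j‖) : ℝ) : ℂ) *
        Sum.elim (atom n (t j) (φ j)) (fun _ => (1 : ℂ)) i *
        (((Real.sqrt (‖c j‖) : ℝ) : ℂ) *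
          conj (Sum.elim (atom n (t j) (φ j)) (fun _ => (1 : ℂ)) i')) =
        (((Real.sqrt (‖c j‖) * Real.sqrt (‖c j‖) : ℝ)) : ℂ) *
        (Sum.elim (atom n (t j) (φ j)) (fun _ => (1 : ℂ)) i *
          conj (Sum.elim (atom n (t j) (φ j)) (fun _ => (1 : ℂ)) i')) by push_cast; ring]
    rw [Real.mul_self_sqrt (norm_nonneg _)]
  ext i i'
  rw [Matrix.mul_apply]
  simp only [key]
  cases i with
  | inl f =>
    cases i' with
    | inl g =>
      simp only [blockMat, fromBlocks_apply₁₁, Matrix.sum_apply, Matrix.smul_apply,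
        vecMulVec_apply, smul_eq_mul, Pi.star_apply, RCLike.star_def, Sum.elim_inl]
    | inr u =>
      simp only [blockMat, fromBlocks_apply₁₂, replicateCol_apply, Sum.elim_inl, Sum.elim_inr,
        _root_.map_one, mul_one, hX, Finset.sum_apply, Pi.smul_apply, smul_eq_mul]
  | inr u =>
    cases i' with
    | inl g =>
      simp only [blockMat, fromBlocks_apply₂₁, replicateRow_apply, Pi.star_apply, hX,
        Finset.sum_apply, Pi.smul_apply, smul_eq_mul, Sum.elim_inl, Sum.elim_inr, one_mul,
        RCLike.star_def, map_sum, _root_.map_mul, Complex.conj_ofReal]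
    | inr u' =>
      simp only [blockMat, fromBlocks_apply₂₂, Matrix.of_apply, Sum.elim_inr, _root_.map_one,
        mul_one, one_mul]
      push_cast
      ring

lemma blockMat_posSemidef (n k : ℕ) (X : Fin n → ℂ) (c : Fin k → ℂ) (t φ : Fin k → ℝ)
    (hX : X = ∑ j, (‖c j‖ : ℂ) • atom n (t j) (φ j)) :
    (blockMat
        (∑ j, (‖c j‖ : ℂ) •
          vecMulVec (atom n (t j) (φ j)) (star (atom n (t j) (φ j))))
        X (∑ j, ‖c j‖)).PosSemidef := by
  rw [blockMat_eq n k X c t φ hX]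
  exact Matrix.posSemidef_conjTranspose_mul_self _

lemma trace_T (n k : ℕ) (c : Fin k → ℂ) (t φ : Fin k → ℝ) :
    (∑ j, (‖c j‖ : ℂ) •
        vecMulVec (atom n (t j) (φ j)) (star (atom n (t j) (φ j)))).trace =
      ((n : ℝ) * ∑ j, ‖c j‖ : ℝ) := by
  rw [Matrix.trace_sum]
  have h1 : ∀ j : Fin k,
      ((‖c j‖ : ℂ) •
        vecMulVec (atom n (t j) (φ j)) (star (atom n (t j) (φ j)))).trace =
      ((n : ℝ) * ‖c j‖ : ℝ) := by
    intro j
    rw [Matrix.trace_smul]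
    have h2 : (vecMulVec (atom n (t j) (φ j)) (star (atom n (t j) (φ j)))).trace = (n : ℂ) := by
      rw [Matrix.trace]
      have h3 : ∀ f : Fin n,
          vecMulVec (atom n (t j) (φ j)) (star (atom n (t j) (φ j))) f f = 1 := by
        intro f
        simp only [vecMulVec_apply, Pi.star_apply, RCLike.star_def]
        rw [atom_mul_conj]
        simp
      simp [Matrix.diag_apply, h3]
    rw [h2, smul_eq_mul]
    push_cast
    ring
  rw [Finset.sum_congr rfl (fun j _ => h1 j)]
  push_cast
  rw [Finset.mul_sum]

lemma T_eq_toep (n k : ℕ) (c : Fin k → ℂ) (t φ : Fin k → ℝ) :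
    (∑ j, (‖c j‖ : ℂ) •
        vecMulVec (atom n (t j) (φ j)) (star (atom n (t j) (φ j)))) =
      toep n (fun m => ∑ j, (‖c j‖ : ℂ) *
        Complex.exp (-Complex.I * ((2 * Real.pi * (m : ℕ) * t j : ℝ)))) := by
  ext f g
  simp only [Matrix.sum_apply, Matrix.smul_apply, vecMulVec_apply, smul_eq_mul,
    Pi.star_apply, RCLike.star_def, toep, Matrix.of_apply]
  split_ifs with h
  · refine Finset.sum_congr rfl fun j _ => ?_
    rw [atom_mul_conj]
    congr 2
    push_cast [Nat.cast_sub h]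
    ring
  · rw [map_sum]
    refine Finset.sum_congr rfl fun j _ => ?_
    have h' : (f : ℕ) ≤ (g : ℕ) := le_of_not_ge h
    rw [atom_mul_conj, _root_.map_mul, Complex.conj_ofReal, ← Complex.exp_conj]
    congr 1
    simp only [_root_.map_mul, map_neg, Complex.conj_I, Complex.conj_ofReal]
    push_cast [Nat.cast_sub h']
    ring

lemma psd_diag_nonneg {m : Type*} [Fintype m] [DecidableEq m] {M : Matrix m m ℂ}
    (hM : M.PosSemidef) (i : m) : 0 ≤ (M i i).re := by
  have := hM.dotProduct_mulVec_nonneg (Pi.single i 1)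
  have h2 : star (Pi.single i (1:ℂ)) ⬝ᵥ M *ᵥ Pi.single i 1 = M i i := by
    simp [dotProduct, Matrix.mulVec, Pi.single_apply, mul_ite, ite_mul,
      Finset.sum_ite_eq', Pi.star_apply, apply_ite]
  rw [h2] at this
  exact_mod_cast (Complex.le_def.mp this).1

/-- Feasibility direction of Proposition 1: an atomic decomposition of `X` yields a feasible
point of the SDP with value `(Σ|c_j|)²`; hence the SDP value is at most `‖X‖_A²`. -/
theorem sdp_le_squared_atomicNorm (n k : ℕ) (hn : 0 < n) (X : Fin n → ℂ)
    (c : Fin k → ℂ) (t φ : Fin k → ℝ)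
    (ht : ∀ j, t j ∈ Set.Ico (0 : ℝ) 1) (hφ : ∀ j, φ j ∈ Set.Ico (0 : ℝ) (2 * Real.pi))
    (hX : X = ∑ j, (‖c j‖ : ℂ) • atom n (t j) (φ j)) :
    (blockMat
        (∑ j, (‖c j‖ : ℂ) •
          vecMulVec (atom n (t j) (φ j)) (star (atom n (t j) (φ j))))
        X (∑ j, ‖c j‖)).PosSemidef ∧
    (1 / (n : ℝ)) * (∑ j, ‖c j‖) *
        ((∑ j, (‖c j‖ : ℂ) •
          vecMulVec (atom n (t j) (φ j)) (star (atom n (t j) (φ j)))).trace).re =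
      (∑ j, ‖c j‖) ^ 2 ∧
    sInf { v : ℝ | ∃ (u : Fin n → ℂ) (s : ℝ),
        (blockMat (toep n u) X s).PosSemidef ∧
        v = (1 / (n : ℝ)) * s * ((toep n u).trace).re } ≤ (atomicNorm X) ^ 2 := by
  have hn' : (n : ℝ) ≠ 0 := Nat.cast_ne_zero.mpr hn.ne'
  refine ⟨blockMat_posSemidef n k X c t φ hX, ?_, ?_⟩
  · rw [trace_T n k c t φ, Complex.ofReal_re]
    field_simp
  · -- third conjunct
    set SDP : Set ℝ := { v : ℝ | ∃ (u : Fin n → ℂ) (s : ℝ),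
        (blockMat (toep n u) X s).PosSemidef ∧
        v = (1 / (n : ℝ)) * s * ((toep n u).trace).re } with hSDP
    set S : Set ℝ := { v : ℝ | ∃ (k : ℕ) (c : Fin k → ℂ) (t φ : Fin k → ℝ),
        (∀ j, t j ∈ Set.Ico (0 : ℝ) 1) ∧ (∀ j, φ j ∈ Set.Ico (0 : ℝ) (2 * Real.pi)) ∧
        X = ∑ j, (‖c j‖ : ℂ) • atom n (t j) (φ j) ∧
        v = ∑ j, ‖c j‖ } with hS
    -- every v ∈ S yields v² ∈ SDP
    have hmem : ∀ v ∈ S, v ^ 2 ∈ SDP := by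
      rintro v ⟨k', c', t', φ', _, _, hX', hv⟩
      refine ⟨fun m => ∑ j, (‖c' j‖ : ℂ) *
        Complex.exp (-Complex.I * ((2 * Real.pi * (m : ℕ) * t' j : ℝ))), v, ?_, ?_⟩
      · rw [← T_eq_toep n k' c' t' φ', hv]
        exact blockMat_posSemidef n k' X c' t' φ' hX'
      · rw [← T_eq_toep n k' c' t' φ', trace_T n k' c' t' φ', Complex.ofReal_re, hv]
        field_simp
    have hSne : S.Nonempty := ⟨∑ j, ‖c j‖, k, c, t, φ, ht, hφ, hX, rfl⟩
    have hSnn : ∀ v ∈ S, 0 ≤ v := by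
      rintro v ⟨k', c', t', φ', _, _, _, hv⟩
      rw [hv]
      exact Finset.sum_nonneg fun j _ => norm_nonneg _
    have hSbdd : BddBelow S := ⟨0, fun v hv => hSnn v hv⟩
    -- SDP is bounded below by 0
    have hSDPnn : ∀ v ∈ SDP, 0 ≤ v := by
      rintro v ⟨u, s, hpsd, hv⟩
      have hs : 0 ≤ s := by
        have := psd_diag_nonneg hpsd (Sum.inr ())
        simpa [blockMat] using this
      have htr : 0 ≤ ((toep n u).trace).re := by
        rw [Matrix.trace]
        have : ∀ f : Fin n, 0 ≤ ((toep n u).diag f).re := by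
          intro f
          have := psd_diag_nonneg hpsd (Sum.inl f)
          simpa [blockMat] using this
        calc (0:ℝ) ≤ ∑ f, ((toep n u).diag f).re := Finset.sum_nonneg fun f _ => this f
          _ = _ := by rw [Complex.re_sum]
      rw [hv]
      positivity
    have hSDPbdd : BddBelow SDP := ⟨0, fun v hv => hSDPnn v hv⟩
    -- sInf SDP ≤ v² for all v ∈ S
    have hle : ∀ v ∈ S, sInf SDP ≤ v ^ 2 := fun v hv => csInf_le hSDPbdd (hmem v hv)
    -- conclude
    have hInfS_nn : 0 ≤ sInf S := le_csInf hSne hSnn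
    show sInf SDP ≤ (sInf S) ^ 2
    by_contra hcon
    push_neg at hcon
    have hIpos : 0 ≤ sInf SDP := le_trans (sq_nonneg _) hcon.le
    have h1 : sInf S < Real.sqrt (sInf SDP) := (Real.lt_sqrt hInfS_nn).mpr hcon
    obtain ⟨v, hvS, hv⟩ := exists_lt_of_csInf_lt hSne h1
    have hv2 : v ^ 2 < sInf SDP := by
      calc v ^ 2 < Real.sqrt (sInf SDP) ^ 2 :=
            pow_lt_pow_left₀ hv (hSnn v hvS) two_ne_zero
        _ = sInf SDP := Real.sq_sqrt hIpos
    exact absurd (hle v hvS) (not_le.mpr hv2)
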